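/- Let A and B be nonempty finite types, let ρ be a positive definite Hermitian complex matrix indexed by A, and let ω be any complex matrix indexed by A × B. Set R = ρ ⊗ₖ 1. Then the matrix-valued function t ↦ exp(−(t/2)·R) · ω · exp(−(t/2)·R) is integrable on the interval (0,∞), and the matrix J = ∫_{t ∈ (0,∞)} exp(−(t/2)·R) · ω · exp(−(t/2)·R) dt satisfies R ★ J = ω, i.e. (R·J + J·R)/2 = ω. -/

import Mathlib

open Matrix
open scoped Kronecker ComplexOrder

noncomputable def jordan {n : Type*} [Fintype n] (X Y : Matrix n n ℂ) : Matrix n n ℂ :=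
  (2 : ℂ)⁻¹ • (X * Y + Y * X)

noncomputable def trB {A B : Type*} [Fintype B] (M : Matrix (A × B) (A × B) ℂ) : Matrix A A ℂ :=
  Matrix.of fun i j => ∑ k, M (i, k) (j, k)

noncomputable def trA {A B : Type*} [Fintype A] (M : Matrix (A × B) (A × B) ℂ) : Matrix B B ℂ :=
  Matrix.of fun k l => ∑ i, M (i, k) (i, l)

def ptA {A B : Type*} (M : Matrix (A × B) (A × B) ℂ) : Matrix (A × B) (A × B) ℂ :=
  Matrix.of fun p q => M (q.1, p.2) (p.1, q.2)

def swap (A : Type*) [DecidableEq A] : Matrix (A × A) (A × A) ℂ :=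
  Matrix.of fun p q => if p.1 = q.2 ∧ p.2 = q.1 then 1 else 0

def IsState {A : Type*} [Fintype A] (ρ : Matrix A A ℂ) : Prop :=
  ρ.PosSemidef ∧ ρ.trace = 1

def IsJam {A B : Type*} [Fintype A] [Fintype B] [DecidableEq A]
    (J : Matrix (A × B) (A × B) ℂ) : Prop :=
  (ptA J).PosSemidef ∧ trB J = 1

noncomputable def cost {A B : Type*} [Fintype A] [Fintype B] [DecidableEq A] [DecidableEq B]
    (K : Matrix (A × B) (A × B) ℂ) (ρ : Matrix A A ℂ) (σ : Matrix B B ℂ) : ℝ :=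
  sInf { r : ℝ | ∃ J : Matrix (A × B) (A × B) ℂ, IsJam J ∧
      trA ((ρ ⊗ₖ (1 : Matrix B B ℂ)) * J) = σ ∧
      r = (Matrix.trace (K * jordan (ρ ⊗ₖ (1 : Matrix B B ℂ)) J)).re }

section Helpers
open MeasureTheory
lemma myint {b : ℝ} (hb : 0 < b) :
    ∫ t in Set.Ioi (0:ℝ), Real.exp (-(b * t)) = b⁻¹ := by
  have h := MeasureTheory.integral_comp_mul_left_Ioi (fun u => Real.exp (-u)) 0 hb
  simp only [mul_zero, integral_exp_neg_Ioi_zero, smul_eq_mul, mul_one] at h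
  simpa using h

lemma myintc {b : ℝ} (hb : 0 < b) (c : ℂ) :
    (∫ t in Set.Ioi (0:ℝ), c * ((Real.exp (-(b * t)) : ℝ) : ℂ)) = c * ((b⁻¹ : ℝ) : ℂ) := by
  rw [MeasureTheory.integral_const_mul]
  congr 1
  rw [← myint hb]
  exact integral_ofReal

lemma myintegrable {b : ℝ} (hb : 0 < b) :
    IntegrableOn (fun t : ℝ => Real.exp (-(b * t))) (Set.Ioi (0:ℝ)) := by
  simpa [neg_mul] using exp_neg_integrableOn_Ioi 0 hb

lemma myintegrablec {b : ℝ} (hb : 0 < b) (c : ℂ) :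
    IntegrableOn (fun t : ℝ => c * ((Real.exp (-(b * t)) : ℝ) : ℂ)) (Set.Ioi (0:ℝ)) :=
  ((myintegrable hb).ofReal).const_mul c

lemma entry_expand {n : Type*} [Fintype n] [DecidableEq n] (U N V : Matrix n n ℂ) (d e : n → ℂ) (p q : n) :
    (U * Matrix.diagonal d * N * (Matrix.diagonal e * V)) p q
      = ∑ i, ∑ j, (U p i * N i j * V j q) * (d i * e j) := by
  simp only [Matrix.mul_apply, Matrix.diagonal_apply, ite_mul, mul_ite, zero_mul, mul_zero,
    Finset.sum_ite_eq, Finset.sum_ite_eq', Finset.mem_univ, if_true, Finset.sum_mul,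
    Finset.mul_sum]
  rw [Finset.sum_comm]
  refine Finset.sum_congr rfl fun i _ => Finset.sum_congr rfl fun j _ => by ring

lemma real_smul_mat {n : Type*} (c : ℝ) (M : Matrix n n ℂ) :
    (c : ℝ) • M = (c : ℂ) • M := by
  ext i j; simp [Matrix.smul_apply, Complex.real_smul]


end Helpers

open MeasureTheory in
theorem stmt1 {A B : Type*} [Fintype A] [Fintype B] [Nonempty A] [Nonempty B]
    [DecidableEq A] [DecidableEq B]
    (ρ : Matrix A A ℂ) (hρ : ρ.PosDef)
    (ω : Matrix (A × B) (A × B) ℂ) :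
    (∀ p q : A × B,
      IntegrableOn
        (fun t : ℝ =>
          (NormedSpace.exp ((-(t / 2) : ℝ) • (ρ ⊗ₖ (1 : Matrix B B ℂ))) * ω *
            NormedSpace.exp ((-(t / 2) : ℝ) • (ρ ⊗ₖ (1 : Matrix B B ℂ)))) p q)
        (Set.Ioi (0 : ℝ))) ∧
    jordan (ρ ⊗ₖ (1 : Matrix B B ℂ))
      (Matrix.of fun p q =>
        ∫ t in Set.Ioi (0 : ℝ),
          (NormedSpace.exp ((-(t / 2) : ℝ) • (ρ ⊗ₖ (1 : Matrix B B ℂ))) * ω *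
            NormedSpace.exp ((-(t / 2) : ℝ) • (ρ ⊗ₖ (1 : Matrix B B ℂ)))) p q) = ω := by
  set R : Matrix (A × B) (A × B) ℂ := ρ ⊗ₖ (1 : Matrix B B ℂ) with hRdef
  have hR : R.PosDef := by
    rw [posDef_iff_dotProduct_mulVec]
    constructor
    · show Rᴴ = R
      ext p q
      have h1 := congrFun (congrFun hρ.1 p.1) q.1
      simp only [conjTranspose_apply] at h1
      simp only [hRdef, conjTranspose_apply, kroneckerMap_apply, star_mul', one_apply, h1]
      by_cases h : p.2 = q.2
      · simp [h]
      · simp [h, Ne.symm h]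
    · intro x hx
      have key : dotProduct (star x) (R *ᵥ x)
          = ∑ b : B, dotProduct (star fun a => x (a, b)) (ρ *ᵥ fun a => x (a, b)) := by
        simp only [dotProduct, Matrix.mulVec, hRdef, kroneckerMap_apply, one_apply,
          Pi.star_apply, dotProduct]
        rw [Fintype.sum_prod_type, Finset.sum_comm]
        refine Finset.sum_congr rfl fun b _ => Finset.sum_congr rfl fun a _ => ?_
        congr 1
        rw [Fintype.sum_prod_type]
        refine Finset.sum_congr rfl fun a' _ => ?_
        simp
      rw [key]
      obtain ⟨⟨a0, b0⟩, hp⟩ := Function.ne_iff.mp hx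
      refine Finset.sum_pos' (fun b _ => hρ.posSemidef.dotProduct_mulVec_nonneg _) ⟨b0, Finset.mem_univ _, ?_⟩
      exact hρ.dotProduct_mulVec_pos (fun h => hp (by simpa using congrFun h a0))
  have hH : R.IsHermitian := hR.1
  set lam : (A × B) → ℝ := hH.eigenvalues with hlam
  set U : Matrix (A × B) (A × B) ℂ := (hH.eigenvectorUnitary : Matrix (A × B) (A × B) ℂ) with hUdef
  have hUU : U * star U = 1 := Matrix.mem_unitaryGroup_iff.mp hH.eigenvectorUnitary.2
  have hUU' : star U * U = 1 := Matrix.mem_unitaryGroup_iff'.mp hH.eigenvectorUnitary.2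
  have hUunit : IsUnit U := ⟨⟨U, star U, hUU, hUU'⟩, rfl⟩
  have hUinv : U⁻¹ = star U := Matrix.inv_eq_right_inv hUU
  have hspec : R = U * Matrix.diagonal (fun i => (lam i : ℂ)) * star U := hH.spectral_theorem
  have hexp : ∀ c : ℝ, NormedSpace.exp ((c : ℝ) • R)
      = U * Matrix.diagonal (fun i => Complex.exp ((c * lam i : ℝ) : ℂ)) * star U := by
    intro c
    have h1 : (c : ℝ) • R = U * Matrix.diagonal (fun i => ((c : ℂ) * (lam i : ℂ))) * U⁻¹ := by
      rw [hUinv, real_smul_mat, hspec, ← smul_mul_assoc, ← mul_smul_comm,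
        ← Matrix.diagonal_smul]
      rfl
    rw [h1, Matrix.exp_conj U _ hUunit, Matrix.exp_diagonal, hUinv]
    have hfun : (NormedSpace.exp fun i => (c : ℂ) * (lam i : ℂ))
        = fun i => Complex.exp ((c * lam i : ℝ) : ℂ) := by
      funext i
      rw [Pi.coe_exp, ← Complex.exp_eq_exp_ℂ]
      congr 1
      push_cast
      ring
    rw [hfun]
  set N : Matrix (A × B) (A × B) ℂ := star U * ω * U with hN
  have hωN : U * N * star U = ω := by
    rw [hN]
    simp only [← Matrix.mul_assoc]
    rw [hUU, one_mul, Matrix.mul_assoc, hUU, mul_one]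
  set C : (A × B) → (A × B) → (A × B) → (A × B) → ℂ :=
    fun p q i j => U p i * N i j * (star U) j q with hC
  have hpos : ∀ i j : A × B, 0 < (lam i + lam j) / 2 := fun i j =>
    half_pos (add_pos (hR.eigenvalues_pos i) (hR.eigenvalues_pos j))
  have hg : ∀ (t : ℝ) (p q : A × B),
      (NormedSpace.exp ((-(t / 2) : ℝ) • R) * ω * NormedSpace.exp ((-(t / 2) : ℝ) • R)) p q
        = ∑ i, ∑ j, C p q i j * ((Real.exp (-((lam i + lam j) / 2 * t)) : ℝ) : ℂ) := by
    intro t p q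
    rw [hexp (-(t / 2))]
    set d : (A × B) → ℂ := fun i => Complex.exp (((-(t / 2) * lam i : ℝ)) : ℂ) with hd
    have hprod : U * Matrix.diagonal d * star U * ω * (U * Matrix.diagonal d * star U)
        = U * Matrix.diagonal d * N * (Matrix.diagonal d * star U) := by
      rw [hN]
      simp only [← mul_assoc]
    rw [hprod, entry_expand]
    refine Finset.sum_congr rfl fun i _ => Finset.sum_congr rfl fun j _ => ?_
    congr 1
    rw [hd]
    have harg : -(t / 2) * lam i + -(t / 2) * lam j = -((lam i + lam j) / 2 * t) := by ring
    rw [← Complex.exp_add, ← Complex.ofReal_add, harg, Complex.ofReal_exp]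
  constructor
  · intro p q
    have heq : (fun t : ℝ =>
        (NormedSpace.exp ((-(t / 2) : ℝ) • R) * ω * NormedSpace.exp ((-(t / 2) : ℝ) • R)) p q)
        = fun t : ℝ => ∑ i, ∑ j, C p q i j * ((Real.exp (-((lam i + lam j) / 2 * t)) : ℝ) : ℂ) :=
      funext fun t => hg t p q
    rw [heq]
    refine integrable_finset_sum _ fun i _ => integrable_finset_sum _ fun j _ => ?_
    exact myintegrablec (hpos i j) (C p q i j)
  · set M : Matrix (A × B) (A × B) ℂ :=
      Matrix.of (fun i j => ((((lam i + lam j) / 2 : ℝ)⁻¹ : ℝ) : ℂ) * N i j) with hM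
    have hJ : (Matrix.of fun p q =>
        ∫ t in Set.Ioi (0 : ℝ),
          (NormedSpace.exp ((-(t / 2) : ℝ) • R) * ω *
            NormedSpace.exp ((-(t / 2) : ℝ) • R)) p q) = U * M * star U := by
      ext p q
      simp only [Matrix.of_apply]
      calc (∫ t in Set.Ioi (0 : ℝ),
          (NormedSpace.exp ((-(t / 2) : ℝ) • R) * ω *
            NormedSpace.exp ((-(t / 2) : ℝ) • R)) p q)
          = ∫ t in Set.Ioi (0 : ℝ),
              ∑ i, ∑ j, C p q i j * ((Real.exp (-((lam i + lam j) / 2 * t)) : ℝ) : ℂ) := by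
            exact MeasureTheory.integral_congr_ae (Filter.Eventually.of_forall fun t => hg t p q)
        _ = ∑ i, ∫ t in Set.Ioi (0 : ℝ),
              ∑ j, C p q i j * ((Real.exp (-((lam i + lam j) / 2 * t)) : ℝ) : ℂ) :=
            MeasureTheory.integral_finset_sum _ fun i _ =>
              integrable_finset_sum _ fun j _ => myintegrablec (hpos i j) (C p q i j)
        _ = ∑ i, ∑ j, C p q i j * ((((lam i + lam j) / 2 : ℝ)⁻¹ : ℝ) : ℂ) :=
            Finset.sum_congr rfl fun i _ => by
              rw [MeasureTheory.integral_finset_sum Finset.univ fun j _ =>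
                  myintegrablec (hpos i j) (C p q i j)]
              exact Finset.sum_congr rfl fun j _ => myintc (hpos i j) (C p q i j)
        _ = (U * M * star U) p q := by
            rw [Matrix.mul_apply]
            rw [Finset.sum_comm]
            refine Finset.sum_congr rfl fun i _ => ?_
            rw [Matrix.mul_apply, Finset.sum_mul]
            refine Finset.sum_congr rfl fun j _ => ?_
            simp only [hC, hM, Matrix.of_apply]
            ring
    rw [hJ]
    -- now show jordan R (U * M * star U) = ω
    have hRM : R * (U * M * star U) = U * (Matrix.diagonal (fun i => (lam i : ℂ)) * M) * star U := by
      rw [hspec]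
      simp only [← Matrix.mul_assoc]
      rw [show U * Matrix.diagonal (fun i => (lam i : ℂ)) * star U * U
            = U * Matrix.diagonal (fun i => (lam i : ℂ)) * (star U * U) from by
          simp only [Matrix.mul_assoc], hUU', mul_one]
    have hMR : (U * M * star U) * R = U * (M * Matrix.diagonal (fun i => (lam i : ℂ))) * star U := by
      rw [hspec]
      simp only [← Matrix.mul_assoc]
      rw [show U * M * star U * U = U * M * (star U * U) from by
          simp only [Matrix.mul_assoc], hUU', mul_one]
    have hDM : Matrix.diagonal (fun i => (lam i : ℂ)) * M
        + M * Matrix.diagonal (fun i => (lam i : ℂ)) = (2 : ℂ) • N := by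
      ext i j
      simp only [Matrix.add_apply, Matrix.diagonal_mul, Matrix.mul_diagonal, hM,
        Matrix.of_apply, Matrix.smul_apply, smul_eq_mul]
      have h0 : (lam i + lam j) ≠ 0 := by
        have := hpos i j; linarith
      have h0' : ((lam i : ℂ) + (lam j : ℂ)) ≠ 0 := by
        rw [← Complex.ofReal_add]; exact_mod_cast h0
      push_cast
      field_simp
    show (2 : ℂ)⁻¹ • (R * (U * M * star U) + (U * M * star U) * R) = ω
    rw [hRM, hMR, ← Matrix.add_mul, ← Matrix.mul_add, hDM]
    rw [mul_smul_comm, smul_mul_assoc, smul_smul]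
    norm_num
    exact hωN
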